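/- arXiv:2508.10842 — 8 statements merged into one kernel-verified Lean document; each statement's English description precedes it below -/
import Mathlib

section
/- For every integer n ≥ 3, (1 / C(n+1, 4)) · Σ_{0 ≤ i < j < k < l ≤ n} arcsin( (k − j) / (√(k − i) · √(l − j)) ) = π/6, where the sum ranges over all quadruples of integers 0 ≤ i < j < k < l ≤ n and C(n+1, 4) is the binomial coefficient. -/
open Finset Real

private lemma hockey (r m : ℕ) : ∑ x ∈ Finset.range m, x.choose r = m.choose (r+1) := by
  induction m with
  | zero => simp
  | succ m ih =>
    rw [Finset.sum_range_succ, ih, Nat.choose_succ_succ]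
    simp only [Nat.succ_eq_add_one]
    omega

private lemma trunc {M : Type*} [AddCommMonoid M] (m c : ℕ) (h : c ≤ m) (g : ℕ → M) :
    ∑ x ∈ Finset.range m, (if x < c then g x else 0) = ∑ x ∈ Finset.range c, g x := by
  rw [← Finset.sum_filter]
  apply Finset.sum_congr _ (fun _ _ => rfl)
  ext x
  simp only [Finset.mem_filter, Finset.mem_range]
  omega

private lemma sum4_rev {M : Type*} [AddCommMonoid M] (s : Finset ℕ) (F : ℕ → ℕ → ℕ → ℕ → M) :
    ∑ i ∈ s, ∑ j ∈ s, ∑ k ∈ s, ∑ l ∈ s, F i j k l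
      = ∑ l ∈ s, ∑ k ∈ s, ∑ j ∈ s, ∑ i ∈ s, F i j k l := by
  calc ∑ i ∈ s, ∑ j ∈ s, ∑ k ∈ s, ∑ l ∈ s, F i j k l
      = ∑ i ∈ s, ∑ j ∈ s, ∑ l ∈ s, ∑ k ∈ s, F i j k l :=
        Finset.sum_congr rfl fun _ _ => Finset.sum_congr rfl fun _ _ => Finset.sum_comm
    _ = ∑ i ∈ s, ∑ l ∈ s, ∑ j ∈ s, ∑ k ∈ s, F i j k l :=
        Finset.sum_congr rfl fun _ _ => Finset.sum_comm
    _ = ∑ l ∈ s, ∑ i ∈ s, ∑ j ∈ s, ∑ k ∈ s, F i j k l := Finset.sum_comm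
    _ = ∑ l ∈ s, ∑ i ∈ s, ∑ k ∈ s, ∑ j ∈ s, F i j k l :=
        Finset.sum_congr rfl fun _ _ => Finset.sum_congr rfl fun _ _ => Finset.sum_comm
    _ = ∑ l ∈ s, ∑ k ∈ s, ∑ i ∈ s, ∑ j ∈ s, F i j k l :=
        Finset.sum_congr rfl fun _ _ => Finset.sum_comm
    _ = ∑ l ∈ s, ∑ k ∈ s, ∑ j ∈ s, ∑ i ∈ s, F i j k l :=
        Finset.sum_congr rfl fun _ _ => Finset.sum_congr rfl fun _ _ => Finset.sum_comm

private lemma cnt (m : ℕ) :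
    ∑ i ∈ Finset.range m, ∑ j ∈ Finset.range m, ∑ k ∈ Finset.range m, ∑ l ∈ Finset.range m,
      (if i < j ∧ j < k ∧ k < l then 1 else 0) = m.choose 4 := by
  rw [sum4_rev]
  have h3 : ∀ l ∈ Finset.range m, ∑ k ∈ Finset.range m, ∑ j ∈ Finset.range m, ∑ i ∈ Finset.range m,
      (if i < j ∧ j < k ∧ k < l then 1 else 0) = l.choose 3 := by
    intro l hl
    rw [Finset.mem_range] at hl
    have h2 : ∀ k ∈ Finset.range m, ∑ j ∈ Finset.range m, ∑ i ∈ Finset.range m,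
        (if i < j ∧ j < k ∧ k < l then 1 else 0) = if k < l then k.choose 2 else 0 := by
      intro k hk
      rw [Finset.mem_range] at hk
      have h1 : ∀ j ∈ Finset.range m, ∑ i ∈ Finset.range m,
          (if i < j ∧ j < k ∧ k < l then 1 else 0) = if j < k ∧ k < l then j else 0 := by
        intro j hj
        rw [Finset.mem_range] at hj
        by_cases h : j < k ∧ k < l
        · simp only [h, and_true, if_true]
          rw [trunc m j hj.le (fun _ => 1), Finset.sum_const, Finset.card_range, smul_eq_mul,
            mul_one]
        · rw [if_neg h]
          apply Finset.sum_eq_zero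
          intro i _
          rw [if_neg]
          tauto
      rw [Finset.sum_congr rfl h1]
      by_cases hkl : k < l
      · simp only [hkl, and_true, if_true]
        have : ∀ j, (if j < k then j else 0) = (if j < k then j.choose 1 else 0) := by
          simp [Nat.choose_one_right]
        simp only [this]
        rw [trunc m k hk.le (fun j => j.choose 1), hockey]
      · simp [hkl]
    rw [Finset.sum_congr rfl h2, trunc m l hl.le (fun k => k.choose 2), hockey]
  rw [Finset.sum_congr rfl h3, hockey]

private lemma aux_sqrt (p u v t : ℝ) (hu : 0 < u) (hv : 0 < v) (ht : 0 ≤ t)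
    (h : t^2 + p^2 = (u*v)^2) : Real.sqrt (1 - (p/(u*v))^2) = t/(u*v) := by
  have h1 : 1 - (p/(u*v))^2 = (t/(u*v))^2 := by
    field_simp
    linarith
  rw [h1, Real.sqrt_sq (by positivity)]

private lemma tri (a b c : ℝ) (ha : 0 < a) (hb : 0 < b) (hc : 0 < c) :
    arcsin (b / (Real.sqrt (a+b) * Real.sqrt (b+c)))
      + arcsin (c / (Real.sqrt (b+c) * Real.sqrt (c+a)))
      + arcsin (a / (Real.sqrt (c+a) * Real.sqrt (a+b))) = π/2 := by
  obtain ⟨u, hudef⟩ : ∃ u, Real.sqrt (a+b) = u := ⟨_, rfl⟩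
  obtain ⟨v, hvdef⟩ : ∃ v, Real.sqrt (b+c) = v := ⟨_, rfl⟩
  obtain ⟨w, hwdef⟩ : ∃ w, Real.sqrt (c+a) = w := ⟨_, rfl⟩
  obtain ⟨t, htdef⟩ : ∃ t, Real.sqrt (a*b + a*c + b*c) = t := ⟨_, rfl⟩
  have hu0 : 0 < u := hudef ▸ Real.sqrt_pos.mpr (by linarith)
  have hv0 : 0 < v := hvdef ▸ Real.sqrt_pos.mpr (by linarith)
  have hw0 : 0 < w := hwdef ▸ Real.sqrt_pos.mpr (by linarith)
  have ht0 : 0 < t := htdef ▸ Real.sqrt_pos.mpr (by nlinarith)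
  have hu2 : u^2 = a + b := hudef ▸ Real.sq_sqrt (by linarith)
  have hv2 : v^2 = b + c := hvdef ▸ Real.sq_sqrt (by linarith)
  have hw2 : w^2 = c + a := hwdef ▸ Real.sq_sqrt (by nlinarith)
  have ht2 : t^2 = a*b + a*c + b*c := htdef ▸ Real.sq_sqrt (by nlinarith)
  rw [hudef, hvdef, hwdef]
  have hx1 : b / (u*v) ≤ 1 := by
    rw [div_le_one (by positivity)]
    nlinarith [sq_nonneg (u*v - b), mul_pos hu0 hv0]
  have hy1 : c / (v*w) ≤ 1 := by
    rw [div_le_one (by positivity)]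
    nlinarith [sq_nonneg (v*w - c), mul_pos hv0 hw0]
  have hx0 : (0:ℝ) ≤ b / (u*v) := by positivity
  have hy0 : (0:ℝ) ≤ c / (v*w) := by positivity
  have h1 : Real.sqrt (1 - (b/(u*v))^2) = t/(u*v) :=
    aux_sqrt _ _ _ _ hu0 hv0 ht0.le (by nlinarith)
  have h2 : Real.sqrt (1 - (c/(v*w))^2) = t/(v*w) :=
    aux_sqrt _ _ _ _ hv0 hw0 ht0.le (by nlinarith)
  have hz : a / (w*u) = Real.cos (arcsin (b/(u*v)) + arcsin (c/(v*w))) := by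
    rw [Real.cos_add, Real.cos_arcsin, Real.cos_arcsin,
      Real.sin_arcsin (by linarith) hx1, Real.sin_arcsin (by linarith) hy1, h1, h2]
    rw [div_mul_div_comm, div_mul_div_comm, div_sub_div_same,
      div_eq_div_iff (by positivity) (by positivity)]
    linear_combination (a*u*w)*hv2 - (u*w)*ht2
  have hax : arcsin (b/(u*v)) ≤ π/2 := Real.arcsin_le_pi_div_two _
  have hay : arcsin (c/(v*w)) ≤ π/2 := Real.arcsin_le_pi_div_two _
  have hax0 : 0 ≤ arcsin (b/(u*v)) := Real.arcsin_nonneg.mpr hx0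
  have hay0 : 0 ≤ arcsin (c/(v*w)) := Real.arcsin_nonneg.mpr hy0
  have hfin : arcsin (a/(w*u)) = π/2 - (arcsin (b/(u*v)) + arcsin (c/(v*w))) := by
    rw [hz, ← Real.sin_pi_div_two_sub, Real.arcsin_sin (by linarith) (by linarith)]
  linarith [hfin]

private def qmap (q : ℕ × ℕ × ℕ × ℕ) : ℕ × ℕ × ℕ × ℕ :=
  (q.1, q.1 + q.2.2.1 - q.2.1, q.1 + q.2.2.2 - q.2.1, q.2.2.2)

private noncomputable def gfun (q : ℕ × ℕ × ℕ × ℕ) : ℝ :=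
  Real.arcsin (((q.2.2.1 : ℝ) - q.2.1) /
    (Real.sqrt ((q.2.2.1 : ℝ) - q.1) * Real.sqrt ((q.2.2.2 : ℝ) - q.2.1)))

private def Qset (n : ℕ) : Finset (ℕ × ℕ × ℕ × ℕ) :=
  ((Finset.range (n+1)) ×ˢ (Finset.range (n+1)) ×ˢ (Finset.range (n+1)) ×ˢ
    (Finset.range (n+1))).filter
      (fun q => q.1 < q.2.1 ∧ q.2.1 < q.2.2.1 ∧ q.2.2.1 < q.2.2.2)

private lemma mem_Qset {n i j k l : ℕ} :
    (i, j, k, l) ∈ Qset n ↔ l ≤ n ∧ i < j ∧ j < k ∧ k < l := by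
  simp only [Qset, Finset.mem_filter, Finset.mem_product, Finset.mem_range]
  omega

private lemma qmap_mem {n : ℕ} {q : ℕ × ℕ × ℕ × ℕ} (hq : q ∈ Qset n) : qmap q ∈ Qset n := by
  obtain ⟨i, j, k, l⟩ := q
  rw [mem_Qset] at hq
  simp only [qmap, mem_Qset]
  omega

private lemma qmap3 {n : ℕ} {q : ℕ × ℕ × ℕ × ℕ} (hq : q ∈ Qset n) :
    qmap (qmap (qmap q)) = q := by
  obtain ⟨i, j, k, l⟩ := q
  rw [mem_Qset] at hq
  simp only [qmap, Prod.mk.injEq, true_and, and_true]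
  omega

private lemma triple (i j k l : ℕ) (h1 : i < j) (h2 : j < k) (h3 : k < l) :
    gfun (i, j, k, l) + gfun (qmap (i, j, k, l)) + gfun (qmap (qmap (i, j, k, l))) = π/2 := by
  have n1 : i + (i + l - j) - (i + k - j) = i + l - k := by omega
  have n2 : i + l - (i + k - j) = j + l - k := by omega
  have c1 : ((i + k - j : ℕ) : ℝ) = (i : ℝ) + k - j := by
    rw [Nat.cast_sub (by omega)]; push_cast; ring
  have c2 : ((i + l - j : ℕ) : ℝ) = (i : ℝ) + l - j := by
    rw [Nat.cast_sub (by omega)]; push_cast; ring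
  have c3 : ((i + l - k : ℕ) : ℝ) = (i : ℝ) + l - k := by
    rw [Nat.cast_sub (by omega)]; push_cast; ring
  have c4 : ((j + l - k : ℕ) : ℝ) = (j : ℝ) + l - k := by
    rw [Nat.cast_sub (by omega)]; push_cast; ring
  have key := tri ((j:ℝ) - i) ((k:ℝ) - j) ((l:ℝ) - k)
    (by have := (Nat.cast_lt (α := ℝ)).mpr h1; linarith)
    (by have := (Nat.cast_lt (α := ℝ)).mpr h2; linarith)
    (by have := (Nat.cast_lt (α := ℝ)).mpr h3; linarith)
  simp only [qmap, gfun, n1, n2, c1, c2, c3, c4]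
  convert key using 3 <;> ring_nf

theorem stmt_0 (n : ℕ) (hn : 3 ≤ n) :
    (1 / ((n + 1).choose 4 : ℝ)) *
      ∑ i ∈ Finset.range (n + 1), ∑ j ∈ Finset.range (n + 1),
        ∑ k ∈ Finset.range (n + 1), ∑ l ∈ Finset.range (n + 1),
          (if i < j ∧ j < k ∧ k < l then
            Real.arcsin (((k : ℝ) - j) / (Real.sqrt ((k : ℝ) - i) * Real.sqrt ((l : ℝ) - j)))
          else 0)
    = Real.pi / 6 := by
  have hS : (∑ i ∈ Finset.range (n + 1), ∑ j ∈ Finset.range (n + 1),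
        ∑ k ∈ Finset.range (n + 1), ∑ l ∈ Finset.range (n + 1),
          (if i < j ∧ j < k ∧ k < l then
            Real.arcsin (((k : ℝ) - j) / (Real.sqrt ((k : ℝ) - i) * Real.sqrt ((l : ℝ) - j)))
          else 0)) = ∑ q ∈ Qset n, gfun q := by
    rw [Qset, Finset.sum_filter]
    simp only [Finset.sum_product]
    rfl
  have hb1 : ∑ q ∈ Qset n, gfun (qmap q) = ∑ q ∈ Qset n, gfun q :=
    Finset.sum_nbij' (i := qmap) (j := fun q => qmap (qmap q))
      (fun q hq => qmap_mem hq)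
      (fun q hq => qmap_mem (qmap_mem hq))
      (fun q hq => qmap3 hq)
      (fun q hq => qmap3 hq)
      (fun q hq => rfl)
  have hb2 : ∑ q ∈ Qset n, gfun (qmap (qmap q)) = ∑ q ∈ Qset n, gfun q :=
    Finset.sum_nbij' (i := fun q => qmap (qmap q)) (j := qmap)
      (fun q hq => qmap_mem (qmap_mem hq))
      (fun q hq => qmap_mem hq)
      (fun q hq => qmap3 hq)
      (fun q hq => qmap3 hq)
      (fun q hq => rfl)
  have hsum3 : (3 : ℝ) * (∑ q ∈ Qset n, gfun q) = (Qset n).card * (π/2) := by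
    have : (3 : ℝ) * (∑ q ∈ Qset n, gfun q)
        = ∑ q ∈ Qset n, (gfun q + gfun (qmap q) + gfun (qmap (qmap q))) := by
      rw [Finset.sum_add_distrib, Finset.sum_add_distrib, hb1, hb2]; ring
    rw [this]
    have hconst : ∑ q ∈ Qset n, (gfun q + gfun (qmap q) + gfun (qmap (qmap q)))
        = ∑ _q ∈ Qset n, (π/2 : ℝ) :=
      Finset.sum_congr rfl (fun q hq => by
        obtain ⟨i, j, k, l⟩ := q
        rw [mem_Qset] at hq
        exact triple i j k l hq.2.1 hq.2.2.1 hq.2.2.2)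
    rw [hconst, Finset.sum_const, nsmul_eq_mul]
  have hcard : (Qset n).card = (n+1).choose 4 := by
    rw [Qset, Finset.card_filter]
    simp only [Finset.sum_product]
    exact cnt (n+1)
  have hpos : 0 < (n+1).choose 4 := Nat.choose_pos (by omega)
  rw [hS]
  have hval : (∑ q ∈ Qset n, gfun q) = ((n+1).choose 4 : ℝ) * (π/6) := by
    have := hsum3
    rw [hcard] at this
    field_simp at this ⊢
    linarith
  rw [hval]
  field_simp
end

section
/- Let n ≥ 3 and let j, k be integers with 0 < j < k < n. Define Lⁿ(j, k) := arcsin( (k − j) / (√k · √(n − j)) ). Then Lⁿ(j, k) + Lⁿ(j, n − k + j) + Lⁿ(n − k, n − k + j) = π/2. -/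
set_option maxHeartbeats 800000

open Real

lemma combi_aux (J K N : ℝ) (hJ : 0 < J) (hJK : J < K) (hKN : K < N) :
    Real.arcsin ((K - J) / (Real.sqrt K * Real.sqrt (N - J)))
      + Real.arcsin ((N - K) / (Real.sqrt (N - K + J) * Real.sqrt (N - J)))
      + Real.arcsin (J / (Real.sqrt (N - K + J) * Real.sqrt K))
    = Real.pi / 2 := by
  have hK : (0:ℝ) < K := hJ.trans hJK
  have hNJ : (0:ℝ) < N - J := by linarith
  have hNK : (0:ℝ) < N - K := by linarith
  have hC : (0:ℝ) < N - K + J := by linarith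
  set D : ℝ := K * (N - K) + J * (K - J) with hDdef
  have hD : 0 < D := by
    have : 0 < K * (N - K) := mul_pos hK hNK
    have : 0 < J * (K - J) := mul_pos hJ (by linarith)
    nlinarith
  have sK := Real.sqrt_pos.2 hK
  have sNJ := Real.sqrt_pos.2 hNJ
  have sC := Real.sqrt_pos.2 hC
  have sD := Real.sqrt_pos.2 hD
  have mK : Real.sqrt K * Real.sqrt K = K := Real.mul_self_sqrt hK.le
  have mNJ : Real.sqrt (N - J) * Real.sqrt (N - J) = N - J := Real.mul_self_sqrt hNJ.le
  have mC : Real.sqrt (N - K + J) * Real.sqrt (N - K + J) = N - K + J :=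
    Real.mul_self_sqrt hC.le
  have mD : Real.sqrt D * Real.sqrt D = D := Real.mul_self_sqrt hD.le
  set x1 : ℝ := (K - J) / (Real.sqrt K * Real.sqrt (N - J)) with hx1
  set x2 : ℝ := (N - K) / (Real.sqrt (N - K + J) * Real.sqrt (N - J)) with hx2
  set x3 : ℝ := J / (Real.sqrt (N - K + J) * Real.sqrt K) with hx3
  have hx1n : 0 ≤ x1 := div_nonneg (by linarith) (by positivity)
  have hx2n : 0 ≤ x2 := div_nonneg (by linarith) (by positivity)
  have hx3n : 0 ≤ x3 := div_nonneg hJ.le (by positivity)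
  have hx3le : x3 ≤ 1 := by
    rw [hx3, div_le_one (by positivity)]
    nlinarith [mul_pos sC sK, mC, mK, sq_nonneg (Real.sqrt (N-K+J) * Real.sqrt K - J)]
  -- cos of the arcsins
  have cos1 : Real.cos (Real.arcsin x1) = Real.sqrt D / (Real.sqrt K * Real.sqrt (N - J)) := by
    rw [Real.cos_arcsin]
    have h1 : 1 - x1 ^ 2 = D / (K * (N - J)) := by
      rw [hx1, div_pow, mul_pow, Real.sq_sqrt hK.le, Real.sq_sqrt hNJ.le]
      field_simp
      ring
    rw [h1, Real.sqrt_div hD.le, Real.sqrt_mul hK.le]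
  have cos2 : Real.cos (Real.arcsin x2)
      = Real.sqrt D / (Real.sqrt (N - K + J) * Real.sqrt (N - J)) := by
    rw [Real.cos_arcsin]
    have h1 : 1 - x2 ^ 2 = D / ((N - K + J) * (N - J)) := by
      rw [hx2, div_pow, mul_pow, Real.sq_sqrt hC.le, Real.sq_sqrt hNJ.le]
      field_simp
      ring
    rw [h1, Real.sqrt_div hD.le, Real.sqrt_mul hC.le]
  have hx1le : x1 ≤ 1 := by
    rw [hx1, div_le_one (by positivity)]
    nlinarith [mul_pos sK sNJ, mK, mNJ, sq_nonneg (Real.sqrt K * Real.sqrt (N-J) - (K - J))]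
  have hx2le : x2 ≤ 1 := by
    rw [hx2, div_le_one (by positivity)]
    nlinarith [mul_pos sC sNJ, mC, mNJ, sq_nonneg (Real.sqrt (N-K+J) * Real.sqrt (N-J) - (N - K))]
  have sin1 : Real.sin (Real.arcsin x1) = x1 := Real.sin_arcsin (by linarith) hx1le
  have sin2 : Real.sin (Real.arcsin x2) = x2 := Real.sin_arcsin (by linarith) hx2le
  -- key step via injectivity of cos on [0, π]
  have key : Real.arcsin x1 + Real.arcsin x2 = Real.pi / 2 - Real.arcsin x3 := by
    apply Real.injOn_cos
    · constructor
      · have := Real.arcsin_nonneg.2 hx1n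
        have := Real.arcsin_nonneg.2 hx2n
        linarith
      · have := Real.arcsin_le_pi_div_two x1
        have := Real.arcsin_le_pi_div_two x2
        linarith
    · constructor
      · have := Real.arcsin_le_pi_div_two x3
        linarith
      · have := Real.arcsin_nonneg.2 hx3n
        have := Real.pi_pos
        linarith
    · rw [Real.cos_add, cos1, cos2, sin1, sin2,
        Real.cos_pi_div_two_sub, Real.sin_arcsin (by linarith) hx3le, hx1, hx2, hx3]
      have nK : Real.sqrt K ≠ 0 := sK.ne'
      have nNJ : Real.sqrt (N - J) ≠ 0 := sNJ.ne'
      have nC : Real.sqrt (N - K + J) ≠ 0 := sC.ne'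
      have step : Real.sqrt D / (Real.sqrt K * Real.sqrt (N - J))
            * (Real.sqrt D / (Real.sqrt (N - K + J) * Real.sqrt (N - J)))
          - (K - J) / (Real.sqrt K * Real.sqrt (N - J))
            * ((N - K) / (Real.sqrt (N - K + J) * Real.sqrt (N - J)))
          = (Real.sqrt D * Real.sqrt D - (K - J) * (N - K))
            / ((Real.sqrt K * Real.sqrt (N - K + J))
              * (Real.sqrt (N - J) * Real.sqrt (N - J))) := by
        rw [div_mul_div_comm, div_mul_div_comm, div_sub_div_same]
        congr 1
        ring
      rw [step, mD, mNJ]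
      have e2 : D - (K - J) * (N - K) = J * (N - J) := by rw [hDdef]; ring
      rw [e2]
      rw [div_eq_div_iff (by positivity) (by positivity)]
      ring
  linarith

theorem stmt_1 (n j k : ℕ) (hj : 0 < j) (hjk : j < k) (hkn : k < n) :
    Real.arcsin (((k : ℝ) - j) / (Real.sqrt (k : ℝ) * Real.sqrt ((n : ℝ) - j)))
      + Real.arcsin ((((n : ℝ) - k + j) - j) /
          (Real.sqrt ((n : ℝ) - k + j) * Real.sqrt ((n : ℝ) - j)))
      + Real.arcsin ((((n : ℝ) - k + j) - ((n : ℝ) - k)) /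
          (Real.sqrt ((n : ℝ) - k + j) * Real.sqrt ((n : ℝ) - ((n : ℝ) - k))))
    = Real.pi / 2 := by
  have hJ : (0:ℝ) < (j:ℝ) := by exact_mod_cast hj
  have hJK : (j:ℝ) < (k:ℝ) := by exact_mod_cast hjk
  have hKN : (k:ℝ) < (n:ℝ) := by exact_mod_cast hkn
  have e1 : ((n:ℝ) - k + j) - j = (n:ℝ) - k := by ring
  have e2 : ((n:ℝ) - k + j) - ((n:ℝ) - k) = (j:ℝ) := by ring
  have e3 : (n:ℝ) - ((n:ℝ) - k) = (k:ℝ) := by ring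
  rw [e1, e2, e3]
  exact combi_aux (j:ℝ) (k:ℝ) (n:ℝ) hJ hJK hKN
end

section
/- For all real numbers a, b, c with 0 ≤ a ≤ 1, 0 ≤ b ≤ 1 and 0 ≤ c ≤ 1: arcsin(a) + arcsin(b) + arcsin(c) = π/2 if and only if a² + b² + c² + 2abc = 1. -/
theorem stmt_2 (a b c : ℝ) (ha0 : 0 ≤ a) (ha1 : a ≤ 1) (hb0 : 0 ≤ b) (hb1 : b ≤ 1)
    (hc0 : 0 ≤ c) (hc1 : c ≤ 1) :
    Real.arcsin a + Real.arcsin b + Real.arcsin c = Real.pi / 2 ↔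
      a ^ 2 + b ^ 2 + c ^ 2 + 2 * a * b * c = 1 := by
  set α := Real.arcsin a with hαdef
  set β := Real.arcsin b with hβdef
  set γ := Real.arcsin c with hγdef
  have hα0 : 0 ≤ α := Real.arcsin_nonneg.2 ha0
  have hα1 : α ≤ Real.pi / 2 := Real.arcsin_le_pi_div_two a
  have hβ0 : 0 ≤ β := Real.arcsin_nonneg.2 hb0
  have hβ1 : β ≤ Real.pi / 2 := Real.arcsin_le_pi_div_two b
  have hγ0 : 0 ≤ γ := Real.arcsin_nonneg.2 hc0
  have hγ1 : γ ≤ Real.pi / 2 := Real.arcsin_le_pi_div_two c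
  have hsa : Real.sin α = a := Real.sin_arcsin (by linarith) ha1
  have hsb : Real.sin β = b := Real.sin_arcsin (by linarith) hb1
  have hsc : Real.sin γ = c := Real.sin_arcsin (by linarith) hc1
  have hca : Real.cos α = Real.sqrt (1 - a ^ 2) := Real.cos_arcsin a
  have hcb : Real.cos β = Real.sqrt (1 - b ^ 2) := Real.cos_arcsin b
  constructor
  · intro h
    have hγeq : γ = Real.pi / 2 - (α + β) := by linarith
    have hc : c = Real.sqrt (1 - a ^ 2) * Real.sqrt (1 - b ^ 2) - a * b := by
      rw [← hsc, hγeq, Real.sin_pi_div_two_sub, Real.cos_add, hca, hcb, hsa, hsb]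
    have h1 : c + a * b = Real.sqrt ((1 - a ^ 2) * (1 - b ^ 2)) := by
      rw [Real.sqrt_mul (by nlinarith : (0:ℝ) ≤ 1 - a ^ 2)]; linarith
    have h2 : (c + a * b) ^ 2 = (1 - a ^ 2) * (1 - b ^ 2) := by
      rw [h1]; exact Real.sq_sqrt (mul_nonneg (by nlinarith) (by nlinarith))
    linear_combination h2
  · intro h
    have h2 : (c + a * b) ^ 2 = (1 - a ^ 2) * (1 - b ^ 2) := by linear_combination h
    have h1 : c + a * b = Real.sqrt ((1 - a ^ 2) * (1 - b ^ 2)) := by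
      rw [← h2, Real.sqrt_sq (add_nonneg hc0 (mul_nonneg ha0 hb0))]
    have h1' : c + a * b = Real.sqrt (1 - a ^ 2) * Real.sqrt (1 - b ^ 2) := by
      rw [h1, Real.sqrt_mul (by nlinarith : (0:ℝ) ≤ 1 - a ^ 2)]
    have hc : c = Real.sin (Real.pi / 2 - (α + β)) := by
      rw [Real.sin_pi_div_two_sub, Real.cos_add, hca, hcb, hsa, hsb]; linarith
    have key := Real.arcsin_sin (x := Real.pi / 2 - (α + β)) (by linarith) (by linarith)
    rw [← hc] at key
    linarith [key]
end

section
/- Let x, y, ρ be real numbers with 0 ≤ x ≤ y ≤ 1 and 0 < ρ < 1. Then √(1 − ρ^{1−y+x}) · (ρ^{1−y} − ρ − ρ^{y−x} + ρ^{x}) + √(1 − ρ^{y}) · (−ρ^{1−y} − ρ + ρ^{y−x} + ρ^{x}) ≥ 0. -/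
set_option maxHeartbeats 1000000

private lemma aux_pos (L R : ℝ) (h1 : 0 ≤ L) (h2 : R ^ 2 ≤ L ^ 2) : 0 ≤ L + R := by
  nlinarith [sq_nonneg (L + R), sq_nonneg (L - R)]


theorem stmt_3 (x y ρ : ℝ) (hx : 0 ≤ x) (hxy : x ≤ y) (hy : y ≤ 1)
    (hρ0 : 0 < ρ) (hρ1 : ρ < 1) :
    0 ≤ Real.sqrt (1 - ρ ^ (1 - y + x)) * (ρ ^ (1 - y) - ρ - ρ ^ (y - x) + ρ ^ x)
      + Real.sqrt (1 - ρ ^ y) * (-ρ ^ (1 - y) - ρ + ρ ^ (y - x) + ρ ^ x) := by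
  have hρ0' : (0:ℝ) ≤ ρ := hρ0.le
  have hv0 : 0 < ρ ^ x := Real.rpow_pos_of_pos hρ0 x
  have hb0 : 0 < ρ ^ (y - x) := Real.rpow_pos_of_pos hρ0 _
  have hw0 : 0 < ρ ^ (1 - y) := Real.rpow_pos_of_pos hρ0 _
  have hv1 : ρ ^ x ≤ 1 := Real.rpow_le_one hρ0' hρ1.le hx
  have hb1 : ρ ^ (y - x) ≤ 1 := Real.rpow_le_one hρ0' hρ1.le (by linarith)
  have hw1 : ρ ^ (1 - y) ≤ 1 := Real.rpow_le_one hρ0' hρ1.le (by linarith)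
  have e1 : ρ ^ (1 - y + x) = ρ ^ (1 - y) * ρ ^ x := Real.rpow_add hρ0 _ _
  have e2 : ρ ^ y = ρ ^ (y - x) * ρ ^ x := by
    rw [← Real.rpow_add hρ0]; congr 1; ring
  have e3 : ρ = ρ ^ (y - x) * ρ ^ x * ρ ^ (1 - y) := by
    rw [← Real.rpow_add hρ0, ← Real.rpow_add hρ0,
      show y - x + x + (1 - y) = (1:ℝ) by ring, Real.rpow_one]
  set v := ρ ^ x with hv
  set b := ρ ^ (y - x) with hb
  set w := ρ ^ (1 - y) with hw
  rw [e1, e2, e3]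
  set A := Real.sqrt (1 - w * v) with hA
  set B := Real.sqrt (1 - b * v) with hB
  have hwv1 : w * v ≤ 1 := by nlinarith
  have hbv1 : b * v ≤ 1 := by nlinarith
  have hA0 : 0 ≤ A := Real.sqrt_nonneg _
  have hB0 : 0 ≤ B := Real.sqrt_nonneg _
  have hA2 : A ^ 2 = 1 - w * v := Real.sq_sqrt (by linarith)
  have hB2 : B ^ 2 = 1 - b * v := Real.sq_sqrt (by linarith)
  have h1bw : 0 ≤ 1 - b * w := by nlinarith
  -- A + B is positive
  have hprod : b * v * (w * v) < 1 := by
    have h : b * v * (w * v) = ρ * v := by rw [e3]; ring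
    rw [h]; nlinarith
  have hAB : 0 < A + B := by
    rcases lt_or_ge (w * v) 1 with h | h
    · have hApos : 0 < A := Real.sqrt_pos.mpr (by linarith)
      linarith
    · have hbv : b * v < 1 := by nlinarith [mul_pos hb0 hv0]
      have hBpos : 0 < B := Real.sqrt_pos.mpr (by linarith)
      linarith
  -- difference of squares identity
  have hdiff : (A + B) * (A - B) = v * (b - w) := by
    have h : A ^ 2 - B ^ 2 = v * (b - w) := by rw [hA2, hB2]; ring
    linear_combination h
  -- key inequality
  have hK1 : (w - b) ^ 2 ≤ ((1 - w * v) + (1 - b * v)) * (1 - b * w) := by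
    have t1 : 0 ≤ w * (1 - v) * (1 - b * w) :=
      mul_nonneg (mul_nonneg hw0.le (sub_nonneg.2 hv1)) h1bw
    have t2 : 0 ≤ b * (1 - v) * (1 - b * w) :=
      mul_nonneg (mul_nonneg hb0.le (sub_nonneg.2 hv1)) h1bw
    have t3 : 0 ≤ (1 - w ^ 2) * (1 - b) :=
      mul_nonneg (by nlinarith : (0:ℝ) ≤ 1 - w ^ 2) (sub_nonneg.2 hb1)
    have t4 : 0 ≤ (1 - b ^ 2) * (1 - w) :=
      mul_nonneg (by nlinarith : (0:ℝ) ≤ 1 - b ^ 2) (sub_nonneg.2 hw1)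
    linarith [t1, t2, t3, t4]
  have hK : (w - b) ^ 2 ≤ (A + B) ^ 2 * (1 - b * w) := by
    calc (w - b) ^ 2 ≤ ((1 - w * v) + (1 - b * v)) * (1 - b * w) := hK1
      _ ≤ (A + B) ^ 2 * (1 - b * w) := by
          apply mul_le_mul_of_nonneg_right _ h1bw
          nlinarith [mul_nonneg hA0 hB0]
  -- square comparison
  have h4 : ((w - b) ^ 2) ^ 2 ≤ ((A + B) ^ 2 * (1 - b * w)) ^ 2 :=
    pow_le_pow_left₀ (sq_nonneg _) hK 2
  have e4 : ((A - B) * (w - b)) ^ 2 * (A + B) ^ 2 = v ^ 2 * ((w - b) ^ 2) ^ 2 := by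
    linear_combination (((A + B) * (A - B) + v * (b - w)) * (w - b) ^ 2) * hdiff
  have e5 : ((A + B) * (v * (1 - b * w))) ^ 2 * (A + B) ^ 2
      = v ^ 2 * (((A + B) ^ 2 * (1 - b * w)) ^ 2) := by ring
  have hsq : ((A - B) * (w - b)) ^ 2 * (A + B) ^ 2
      ≤ ((A + B) * (v * (1 - b * w))) ^ 2 * (A + B) ^ 2 := by
    rw [e4, e5]
    exact mul_le_mul_of_nonneg_left h4 (sq_nonneg v)
  have h2' : ((A - B) * (w - b)) ^ 2 ≤ ((A + B) * (v * (1 - b * w))) ^ 2 :=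
    le_of_mul_le_mul_right hsq (by positivity)
  have hL0 : 0 ≤ (A + B) * (v * (1 - b * w)) :=
    mul_nonneg hAB.le (mul_nonneg hv0.le h1bw)
  linarith [aux_pos _ _ hL0 h2']
end

section
/- Let k be a real number with k ≠ 1 and let q ≥ 1 and d be integers with 0 ≤ d < q. Then Σ_{i=1}^{q} Σ_{j=d+1}^{d+q} k^{|j−i|} = ( (q − d)(1 − k²) + k(k^{q+d} + k^{q−d} − 2k^{d}) ) / (1 − k)². -/
open Finset

lemma refl_sum (k : ℝ) (e : ℕ) :
    ∑ j ∈ range (e+1), k ^ ((j : ℤ) - e).natAbs = ∑ m ∈ range (e+1), k ^ m := by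
  rw [← Finset.sum_range_reflect]
  refine Finset.sum_congr rfl fun j hj => ?_
  have hj' : j < e + 1 := Finset.mem_range.mp hj
  congr 1
  omega

lemma row_sum (k : ℝ) (e N : ℕ) (h : e ≤ N) :
    ∑ j ∈ range (N+1), k ^ ((j : ℤ) - e).natAbs
      = (∑ m ∈ range (e+1), k ^ m) + k * ∑ m ∈ range (N - e), k ^ m := by
  induction N with
  | zero =>
    have : e = 0 := by omega
    subst this
    simp
  | succ n ih =>
    rcases Nat.lt_or_ge e (n+1) with he | he
    · have he' : e ≤ n := by omega
      rw [Finset.sum_range_succ, ih he']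
      have h1 : ((↑(n+1) : ℤ) - e).natAbs = (n - e) + 1 := by omega
      have h2 : n + 1 - e = (n - e) + 1 := by omega
      rw [h1, h2, Finset.sum_range_succ]
      rw [Finset.sum_range_succ]
      ring
    · have : e = n + 1 := by omega
      subst this
      simp only [Nat.sub_self, Finset.range_zero, Finset.sum_empty, mul_zero, add_zero]
      exact refl_sum k (n+1)

lemma col_sum (k : ℝ) (c n : ℕ) :
    ∑ i ∈ range n, k ^ (((c : ℤ) + n) - i).natAbs
      = k ^ (c+1) * ∑ m ∈ range n, k ^ m := by
  rw [← Finset.sum_range_reflect, Finset.mul_sum]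
  refine Finset.sum_congr rfl fun i hi => ?_
  have hi' : i < n := Finset.mem_range.mp hi
  rw [← pow_add]
  congr 1
  omega

lemma Tlem (k : ℝ) (hk : k ≠ 1) (d m : ℕ) :
    ∑ i ∈ Finset.range (d+1+m), ∑ j ∈ Finset.range (d+1+m), k ^ (((d:ℤ) + j - i).natAbs)
      = (((m:ℝ)+1)*(1-k^2) + k*(k^(2*d+1+m) + k^(m+1) - 2*k^d))/(1-k)^2 := by
  have hk1 : k - 1 ≠ 0 := sub_ne_zero.mpr hk
  have hk1' : (1 : ℝ) - k ≠ 0 := fun h => hk1 (by linarith [sub_eq_zero.mp h])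
  induction m with
  | zero =>
    calc ∑ i ∈ Finset.range (d+1+0), ∑ j ∈ Finset.range (d+1+0), k ^ (((d:ℤ) + j - i).natAbs)
        = ∑ i ∈ Finset.range (d+1), k ^ (d-i) * ∑ j ∈ Finset.range (d+1), k ^ j := by
          refine Finset.sum_congr rfl fun i hi => ?_
          rw [Finset.mul_sum]
          refine Finset.sum_congr rfl fun j hj => ?_
          have hi' : i < d + 1 := Finset.mem_range.mp hi
          rw [← pow_add]
          congr 1
          omega
      _ = (∑ i ∈ Finset.range (d+1), k ^ i) * ∑ j ∈ Finset.range (d+1), k ^ j := by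
          rw [← Finset.sum_mul]
          congr 1
          rw [← Finset.sum_range_reflect]
          refine Finset.sum_congr rfl fun i hi => ?_
          have hi' : i < d + 1 := Finset.mem_range.mp hi
          congr 1
          omega
      _ = ((k^(d+1) - 1)/(k-1)) * ((k^(d+1) - 1)/(k-1)) := by rw [geom_sum_eq hk]
      _ = ((((0:ℕ):ℝ)+1)*(1-k^2) + k*(k^(2*d+1+0) + k^(0+1) - 2*k^d)) / (1-k)^2 := by
          field_simp
          ring
  | succ n ih =>
    have hstep : d + 1 + (n + 1) = (d + 1 + n) + 1 := by ring
    rw [hstep, Finset.sum_range_succ]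
    have hinner : ∀ i ∈ range (d+1+n),
        ∑ j ∈ Finset.range ((d+1+n)+1), k ^ (((d:ℤ) + j - i).natAbs)
          = (∑ j ∈ Finset.range (d+1+n), k ^ (((d:ℤ) + j - i).natAbs))
            + k ^ (((d:ℤ) + (↑(d+1+n) : ℤ) - i).natAbs) := by
      intro i hi
      rw [Finset.sum_range_succ]
    rw [Finset.sum_congr rfl hinner, Finset.sum_add_distrib, ih]
    have hcol : ∑ i ∈ range (d+1+n), k ^ (((d:ℤ) + (↑(d+1+n) : ℤ) - i).natAbs)
        = k ^ (d+1) * ∑ m ∈ range (d+1+n), k ^ m := by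
      exact col_sum k d (d+1+n)
    have hrow : ∑ j ∈ Finset.range ((d+1+n)+1), k ^ (((d:ℤ) + j - (↑(d+1+n) : ℤ)).natAbs)
        = (∑ m ∈ range ((n+1)+1), k ^ m) + k * ∑ m ∈ range d, k ^ m := by
      have h1 : ∑ j ∈ Finset.range ((d+1+n)+1), k ^ (((d:ℤ) + j - (↑(d+1+n) : ℤ)).natAbs)
          = ∑ j ∈ Finset.range ((d+1+n)+1), k ^ (((j:ℤ) - (↑(n+1) : ℤ)).natAbs) := by
        refine Finset.sum_congr rfl fun j _ => ?_
        congr 1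
        push_cast
        omega
      have h2 := row_sum k (n+1) (d+1+n) (by omega)
      have h3 : d + 1 + n - (n+1) = d := by omega
      rw [h1, h2, h3]
    rw [hcol, hrow, geom_sum_eq hk, geom_sum_eq hk, geom_sum_eq hk]
    push_cast
    field_simp
    ring

theorem stmt_7 (k : ℝ) (hk : k ≠ 1) (q d : ℕ) (hq : 1 ≤ q) (hd : d < q) :
    ∑ i ∈ Finset.Icc 1 q, ∑ j ∈ Finset.Icc (d + 1) (d + q), k ^ ((j : ℤ) - i).natAbs
    = (((q : ℝ) - d) * (1 - k ^ 2) + k * (k ^ (q + d) + k ^ (q - d) - 2 * k ^ d)) /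
        (1 - k) ^ 2 := by
  obtain ⟨m, rfl⟩ : ∃ m, q = d + 1 + m := ⟨q - (d+1), by omega⟩
  have h1 : ∑ i ∈ Finset.Icc 1 (d+1+m), ∑ j ∈ Finset.Icc (d + 1) (d + (d+1+m)),
      k ^ ((j : ℤ) - i).natAbs
      = ∑ i ∈ Finset.range (d+1+m), ∑ j ∈ Finset.range (d+1+m), k ^ (((d:ℤ) + j - i).natAbs) := by
    rw [← Finset.Ico_add_one_right_eq_Icc, Finset.sum_Ico_eq_sum_range]
    have e1 : d + 1 + m + 1 - 1 = d + 1 + m := by omega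
    rw [e1]
    refine Finset.sum_congr rfl fun i _ => ?_
    rw [← Finset.Ico_add_one_right_eq_Icc, Finset.sum_Ico_eq_sum_range]
    have e2 : d + (d + 1 + m) + 1 - (d + 1) = d + 1 + m := by omega
    rw [e2]
    refine Finset.sum_congr rfl fun j _ => ?_
    congr 1
    push_cast
    omega
  rw [h1, Tlem k hk d m]
  have e3 : d + 1 + m + d = 2*d+1+m := by omega
  have e4 : d + 1 + m - d = m + 1 := by omega
  rw [e3, e4]
  push_cast
  ring_nf
end

section
/- Let 0 < k_tot < 1, a > 0 and x be a real number with 0 ≤ x < a and x ≤ 1. Let (kₙ) be a sequence of reals in (0,1) with kₙ^{n−1} → k_tot, and let (qₙ), (dₙ) be sequences of natural numbers with qₙ/n → a, dₙ/n → x and dₙ < qₙ for all n. Then ( (qₙ − dₙ)(1 − kₙ²) + kₙ(kₙ^{qₙ+dₙ} + kₙ^{qₙ−dₙ} − 2kₙ^{dₙ}) ) / ( qₙ(1 − kₙ²) − 2kₙ(1 − kₙ^{qₙ}) ) converges, as n → ∞, to ( (a − x)·log(k_tot) + (k_tot^{x} − k_tot^{a+x}/2 − k_tot^{a−x}/2)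 ) / ( a·log(k_tot) + (1 − k_tot^{a}) ). -/
open Filter Real Topology

private lemma div_div_cancel_aux (A B c : ℝ) (hc : c ≠ 0) : A / c / (B / c) = A / B := by
  rcases eq_or_ne B 0 with h | h
  · simp [h]
  · field_simp

theorem stmt_8 (ktot a x : ℝ) (hktot0 : 0 < ktot) (hktot1 : ktot < 1)
    (ha : 0 < a) (hx0 : 0 ≤ x) (hxa : x < a) (hx1 : x ≤ 1)
    (kseq : ℕ → ℝ) (hk0 : ∀ n, 0 < kseq n) (hk1 : ∀ n, kseq n < 1)
    (hklim : Filter.Tendsto (fun n => kseq n ^ (n - 1)) Filter.atTop (nhds ktot))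
    (qseq dseq : ℕ → ℕ)
    (hq : Filter.Tendsto (fun n => (qseq n : ℝ) / n) Filter.atTop (nhds a))
    (hd : Filter.Tendsto (fun n => (dseq n : ℝ) / n) Filter.atTop (nhds x))
    (hdq : ∀ n, dseq n < qseq n) :
    Filter.Tendsto
      (fun n =>
        (((qseq n : ℝ) - dseq n) * (1 - kseq n ^ 2)
            + kseq n * (kseq n ^ (qseq n + dseq n) + kseq n ^ (qseq n - dseq n)
                - 2 * kseq n ^ dseq n))
          / ((qseq n : ℝ) * (1 - kseq n ^ 2) - 2 * kseq n * (1 - kseq n ^ qseq n)))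
      Filter.atTop
      (nhds (((a - x) * Real.log ktot
          + (ktot ^ x - ktot ^ (a + x) / 2 - ktot ^ (a - x) / 2))
        / (a * Real.log ktot + (1 - ktot ^ a)))) := by
  set L := Real.log ktot with hLdef
  have hL : L < 0 := Real.log_neg hktot0 hktot1
  have hLne : L ≠ 0 := hL.ne
  have hlogne : ∀ n, Real.log (kseq n) ≠ 0 :=
    fun n => (Real.log_neg (hk0 n) (hk1 n)).ne
  -- (n-1) * log kₙ → L
  have hlog1 : Tendsto (fun n : ℕ => ((n - 1 : ℕ) : ℝ) * Real.log (kseq n)) atTop (𝓝 L) := by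
    have h := ((Real.continuousAt_log hktot0.ne').tendsto).comp hklim
    refine h.congr fun n => ?_
    simp [Function.comp, Real.log_pow]
  -- log kₙ → 0
  have hnsub : Tendsto (fun n : ℕ => ((n - 1 : ℕ) : ℝ)) atTop atTop :=
    tendsto_natCast_atTop_atTop.comp (tendsto_sub_atTop_nat 1)
  have hlog0 : Tendsto (fun n => Real.log (kseq n)) atTop (𝓝 0) := by
    have h := hlog1.mul (tendsto_inv_atTop_zero.comp hnsub)
    rw [mul_zero] at h
    refine h.congr' ?_
    filter_upwards [eventually_ge_atTop 2] with n hn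
    have h1 : ((n - 1 : ℕ) : ℝ) ≠ 0 := Nat.cast_ne_zero.mpr (by omega)
    simp only [Function.comp]
    rw [mul_comm (((n - 1 : ℕ) : ℝ)) (Real.log (kseq n)), mul_assoc,
      mul_inv_cancel₀ h1, mul_one]
  -- n * log kₙ → L
  have hnlog : Tendsto (fun n : ℕ => (n : ℝ) * Real.log (kseq n)) atTop (𝓝 L) := by
    have h := hlog1.add hlog0
    rw [add_zero] at h
    refine h.congr' ?_
    filter_upwards [eventually_ge_atTop 1] with n hn
    have : ((n - 1 : ℕ) : ℝ) = (n : ℝ) - 1 := by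
      rw [Nat.cast_sub hn]; simp
    rw [this]; ring
  -- kₙ → 1
  have hk1' : Tendsto kseq atTop (𝓝 1) := by
    have h := Real.continuous_exp.continuousAt.tendsto.comp hlog0
    rw [Real.exp_zero] at h
    exact h.congr fun n => by simp [Function.comp, Real.exp_log (hk0 n)]
  -- powers: cₙ/n → c  ⇒  kₙ^{cₙ} → ktot^c
  have hpow : ∀ (c : ℕ → ℕ) (cl : ℝ),
      Tendsto (fun n => (c n : ℝ) / n) atTop (𝓝 cl) →
      Tendsto (fun n => kseq n ^ c n) atTop (𝓝 (ktot ^ cl)) := by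
    intro c cl hc
    have h1 := hc.mul hnlog
    have h2 : Tendsto (fun n => (c n : ℝ) * Real.log (kseq n)) atTop (𝓝 (cl * L)) := by
      refine h1.congr' ?_
      filter_upwards [eventually_ge_atTop 1] with n hn
      have hn0 : (n : ℝ) ≠ 0 := Nat.cast_ne_zero.mpr (by omega)
      field_simp
    have h3 := Real.continuous_exp.continuousAt.tendsto.comp h2
    have h4 : Real.exp (cl * L) = ktot ^ cl := by
      rw [Real.rpow_def_of_pos hktot0, mul_comm]
    rw [h4] at h3
    refine h3.congr fun n => ?_
    simp only [Function.comp]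
    rw [Real.exp_nat_mul, Real.exp_log (hk0 n)]
  -- slope: (kₙ - 1)/log kₙ → 1
  have hslope : Tendsto (fun n => (kseq n - 1) / Real.log (kseq n)) atTop (𝓝 1) := by
    have hder : HasDerivAt Real.exp 1 0 := by simpa using Real.hasDerivAt_exp 0
    have h := hasDerivAt_iff_tendsto_slope.mp hder
    have hmem : Tendsto (fun n => Real.log (kseq n)) atTop (𝓝[≠] 0) :=
      tendsto_nhdsWithin_of_tendsto_nhds_of_eventually_within _ hlog0
        (Eventually.of_forall fun n => hlogne n)
    have h2 := h.comp hmem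
    refine h2.congr fun n => ?_
    simp only [Function.comp, slope_def_field, Real.exp_zero]
    rw [Real.exp_log (hk0 n), sub_zero]
  -- n(1-kₙ) → -L
  have hc : Tendsto (fun n : ℕ => (n : ℝ) * (1 - kseq n)) atTop (𝓝 (-L)) := by
    have h := (hnlog.mul hslope).neg
    rw [mul_one] at h
    refine h.congr fun n => ?_
    have := hlogne n
    field_simp
    ring
  have hcinv : Tendsto (fun n : ℕ => ((n : ℝ) * (1 - kseq n))⁻¹) atTop (𝓝 (-L)⁻¹) :=
    hc.inv₀ (neg_ne_zero.mpr hLne)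
  -- cast limits
  have hsubR : Tendsto (fun n => ((qseq n : ℝ) - dseq n) / n) atTop (𝓝 (a - x)) := by
    refine (hq.sub hd).congr fun n => ?_
    rw [sub_div]
  have hsubN : Tendsto (fun n => ((qseq n - dseq n : ℕ) : ℝ) / n) atTop (𝓝 (a - x)) := by
    refine (hq.sub hd).congr fun n => ?_
    rw [Nat.cast_sub (hdq n).le, sub_div]
  have haddN : Tendsto (fun n => ((qseq n + dseq n : ℕ) : ℝ) / n) atTop (𝓝 (a + x)) := by
    refine (hq.add hd).congr fun n => ?_
    push_cast
    rw [add_div]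
  -- numerator / (n(1-k))
  have hNum : Tendsto (fun n =>
      (((qseq n : ℝ) - dseq n) * (1 - kseq n ^ 2)
          + kseq n * (kseq n ^ (qseq n + dseq n) + kseq n ^ (qseq n - dseq n)
              - 2 * kseq n ^ dseq n)) / ((n : ℝ) * (1 - kseq n))) atTop
      (𝓝 ((a - x) * (1 + 1)
        + 1 * (ktot ^ (a + x) + ktot ^ (a - x) - 2 * ktot ^ x) * (-L)⁻¹)) := by
    have hexp : Tendsto (fun n =>
        ((qseq n : ℝ) - dseq n) / n * (1 + kseq n)
          + kseq n * (kseq n ^ (qseq n + dseq n) + kseq n ^ (qseq n - dseq n)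
              - 2 * kseq n ^ dseq n) * ((n : ℝ) * (1 - kseq n))⁻¹) atTop
        (𝓝 ((a - x) * (1 + 1)
          + 1 * (ktot ^ (a + x) + ktot ^ (a - x) - 2 * ktot ^ x) * (-L)⁻¹)) := by
      refine Tendsto.add (hsubR.mul (tendsto_const_nhds.add hk1')) ?_
      refine Tendsto.mul (hk1'.mul ?_) hcinv
      exact ((hpow _ _ haddN).add (hpow _ _ hsubN)).sub
        ((hpow _ _ hd).const_mul 2)
    refine hexp.congr' ?_
    filter_upwards [eventually_ge_atTop 1] with n hn
    have hn0 : (n : ℝ) ≠ 0 := Nat.cast_ne_zero.mpr (by omega)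
    have hk : (1 : ℝ) - kseq n ≠ 0 := sub_ne_zero.mpr (hk1 n).ne'
    field_simp
    ring
  -- denominator / (n(1-k))
  have hDen : Tendsto (fun n =>
      ((qseq n : ℝ) * (1 - kseq n ^ 2) - 2 * kseq n * (1 - kseq n ^ qseq n))
        / ((n : ℝ) * (1 - kseq n))) atTop
      (𝓝 (a * (1 + 1) - 2 * 1 * (1 - ktot ^ a) * (-L)⁻¹)) := by
    have hexp : Tendsto (fun n =>
        (qseq n : ℝ) / n * (1 + kseq n)
          - 2 * kseq n * (1 - kseq n ^ qseq n) * ((n : ℝ) * (1 - kseq n))⁻¹) atTop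
        (𝓝 (a * (1 + 1) - 2 * 1 * (1 - ktot ^ a) * (-L)⁻¹)) := by
      refine Tendsto.sub (hq.mul (tendsto_const_nhds.add hk1')) ?_
      exact (((hk1'.const_mul 2)).mul
        (tendsto_const_nhds.sub (hpow _ _ hq))).mul hcinv
    refine hexp.congr' ?_
    filter_upwards [eventually_ge_atTop 1] with n hn
    have hn0 : (n : ℝ) ≠ 0 := Nat.cast_ne_zero.mpr (by omega)
    have hk : (1 : ℝ) - kseq n ≠ 0 := sub_ne_zero.mpr (hk1 n).ne'
    field_simp
    ring
  -- denominator limit is nonzero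
  have hu0 : 0 < ktot ^ a := Real.rpow_pos_of_pos hktot0 a
  have hu1 : ktot ^ a < 1 := Real.rpow_lt_one hktot0.le hktot1 ha
  have hlt : a * L + (1 - ktot ^ a) < 0 := by
    have h := Real.log_lt_sub_one_of_pos hu0 hu1.ne
    rw [Real.log_rpow hktot0] at h
    linarith
  have hD'ne : a * (1 + 1) - 2 * 1 * (1 - ktot ^ a) * (-L)⁻¹ ≠ 0 := by
    have heq : a * (1 + 1) - 2 * 1 * (1 - ktot ^ a) * (-L)⁻¹
        = 2 * (a * L + (1 - ktot ^ a)) / L := by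
      rw [eq_div_iff hLne]
      field_simp [hLne]
      ring
    rw [heq]
    exact div_ne_zero (by nlinarith) hLne
  have hmain := hNum.div hDen hD'ne
  have hkey : Tendsto
      (fun n =>
        (((qseq n : ℝ) - dseq n) * (1 - kseq n ^ 2)
            + kseq n * (kseq n ^ (qseq n + dseq n) + kseq n ^ (qseq n - dseq n)
                - 2 * kseq n ^ dseq n))
          / ((qseq n : ℝ) * (1 - kseq n ^ 2) - 2 * kseq n * (1 - kseq n ^ qseq n)))
      atTop
      (𝓝 (((a - x) * (1 + 1)
          + 1 * (ktot ^ (a + x) + ktot ^ (a - x) - 2 * ktot ^ x) * (-L)⁻¹)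
        / (a * (1 + 1) - 2 * 1 * (1 - ktot ^ a) * (-L)⁻¹))) := by
    refine hmain.congr' ?_
    filter_upwards [eventually_ge_atTop 1] with n hn
    have hn0 : (n : ℝ) ≠ 0 := Nat.cast_ne_zero.mpr (by omega)
    have hk : (1 : ℝ) - kseq n ≠ 0 := sub_ne_zero.mpr (hk1 n).ne'
    have hcne : (n : ℝ) * (1 - kseq n) ≠ 0 := mul_ne_zero hn0 hk
    simp only [Pi.div_apply]
    rw [div_div_cancel_aux _ _ _ hcne]
  have hfinal : ((a - x) * (1 + 1)
        + 1 * (ktot ^ (a + x) + ktot ^ (a - x) - 2 * ktot ^ x) * (-L)⁻¹)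
      / (a * (1 + 1) - 2 * 1 * (1 - ktot ^ a) * (-L)⁻¹)
      = ((a - x) * L + (ktot ^ x - ktot ^ (a + x) / 2 - ktot ^ (a - x) / 2))
        / (a * L + (1 - ktot ^ a)) := by
    rw [div_eq_div_iff hD'ne hlt.ne]
    field_simp [hLne]
    ring
  rw [hfinal] at hkey
  exact hkey
end

section
/- Let 0 < k_tot < 1, a > 0 and x be a real number with a < x ≤ 1. Let (kₙ) be a sequence of reals in (0,1) with kₙ^{n−1} → k_tot, and let (qₙ), (dₙ) be sequences of natural numbers with qₙ/n → a, dₙ/n → x and dₙ ≥ qₙ − 1 for all n. Then ( (1 − kₙ^{qₙ})² · kₙ^{dₙ+1−qₙ} ) / ( qₙ(1 − kₙ²) − 2kₙ(1 − kₙ^{qₙ}) ) converges, as n → ∞, to ( (1 − k_tot^{a})² · k_tot^{x−a} ) / ( −2( a·log(k_tot) + (1 − k_tot^{a}) ) ). -/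
open Filter Real Topology

theorem stmt_9 (ktot a x : ℝ) (hktot0 : 0 < ktot) (hktot1 : ktot < 1)
    (ha : 0 < a) (hax : a < x) (hx1 : x ≤ 1)
    (kseq : ℕ → ℝ) (hk0 : ∀ n, 0 < kseq n) (hk1 : ∀ n, kseq n < 1)
    (hklim : Filter.Tendsto (fun n => kseq n ^ (n - 1)) Filter.atTop (nhds ktot))
    (qseq dseq : ℕ → ℕ)
    (hq : Filter.Tendsto (fun n => (qseq n : ℝ) / n) Filter.atTop (nhds a))
    (hd : Filter.Tendsto (fun n => (dseq n : ℝ) / n) Filter.atTop (nhds x))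
    (hdq : ∀ n, qseq n - 1 ≤ dseq n) :
    Filter.Tendsto
      (fun n =>
        ((1 - kseq n ^ qseq n) ^ 2 * kseq n ^ (dseq n + 1 - qseq n))
          / ((qseq n : ℝ) * (1 - kseq n ^ 2) - 2 * kseq n * (1 - kseq n ^ qseq n)))
      Filter.atTop
      (nhds (((1 - ktot ^ a) ^ 2 * ktot ^ (x - a))
        / (-2 * (a * Real.log ktot + (1 - ktot ^ a))))) := by
  set L : ℕ → ℝ := fun n => Real.log (kseq n) with hLdef
  have hLneg : ∀ n, L n < 0 := fun n => Real.log_neg (hk0 n) (hk1 n)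
  -- Step A : (n-1) * L n → log ktot
  have h1 : Tendsto (fun n : ℕ => ((n - 1 : ℕ) : ℝ) * L n) atTop (𝓝 (Real.log ktot)) := by
    have h := (Real.continuousAt_log (ne_of_gt hktot0)).tendsto.comp hklim
    refine h.congr fun n => ?_
    simp [Function.comp, Real.log_pow, hLdef]
  -- 1/(n-1) → 0
  have hinv : Tendsto (fun n : ℕ => (((n - 1 : ℕ) : ℝ))⁻¹) atTop (𝓝 0) := by
    apply Tendsto.comp tendsto_inv_atTop_zero
    exact tendsto_natCast_atTop_atTop.comp (tendsto_sub_atTop_nat 1)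
  -- L n → 0
  have hL0 : Tendsto L atTop (𝓝 0) := by
    have h := h1.mul hinv
    rw [mul_zero] at h
    refine h.congr' ?_
    filter_upwards [eventually_ge_atTop 2] with n hn
    have hm : ((n - 1 : ℕ) : ℝ) ≠ 0 := by
      have : 1 ≤ n - 1 := by omega
      exact_mod_cast Nat.one_le_iff_ne_zero.mp this
    rw [mul_comm (((n - 1 : ℕ) : ℝ)) (L n), mul_inv_cancel_right₀ hm]
  -- n * L n → log ktot
  have hnL : Tendsto (fun n : ℕ => (n : ℝ) * L n) atTop (𝓝 (Real.log ktot)) := by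
    have h := h1.add hL0
    rw [add_zero] at h
    refine h.congr' ?_
    filter_upwards [eventually_ge_atTop 1] with n hn
    have hc : ((n - 1 : ℕ) : ℝ) = (n : ℝ) - 1 := by
      rw [Nat.cast_sub hn]; simp
    rw [hc]; ring
  -- key : c n / n → b implies kseq n ^ c n → ktot ^ b
  have key : ∀ (c : ℕ → ℕ) (b : ℝ), Tendsto (fun n => (c n : ℝ) / n) atTop (𝓝 b) →
      Tendsto (fun n => kseq n ^ c n) atTop (𝓝 (ktot ^ b)) := by
    intro c b hc
    have hcb : Tendsto (fun n => (c n : ℝ) * L n) atTop (𝓝 (b * Real.log ktot)) := by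
      have h := hc.mul hnL
      refine h.congr' ?_
      filter_upwards [eventually_ge_atTop 1] with n hn
      have hn0 : (n : ℝ) ≠ 0 := by positivity
      field_simp
    have h := (Real.continuous_exp.tendsto _).comp hcb
    have heq : (fun n => Real.exp ((c n : ℝ) * L n)) = fun n => kseq n ^ c n := by
      funext n
      rw [hLdef, ← Real.log_pow, Real.exp_log (pow_pos (hk0 n) (c n))]
    rw [Real.rpow_def_of_pos hktot0, mul_comm]
    rw [← heq]
    exact h
  have hkq : Tendsto (fun n => kseq n ^ qseq n) atTop (𝓝 (ktot ^ a)) := key _ _ hq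
  have hkd : Tendsto (fun n => kseq n ^ (dseq n + 1 - qseq n)) atTop (𝓝 (ktot ^ (x - a))) := by
    apply key
    have h := (hd.add tendsto_one_div_atTop_nhds_zero_nat).sub hq
    rw [add_zero] at h
    refine h.congr' ?_
    filter_upwards [eventually_ge_atTop 1] with n hn
    have hle : qseq n ≤ dseq n + 1 := by have := hdq n; omega
    have : ((dseq n + 1 - qseq n : ℕ) : ℝ) = (dseq n : ℝ) + 1 - (qseq n : ℝ) := by
      rw [Nat.cast_sub hle]; push_cast; ring
    rw [this]; ring
  -- kseq n → 1
  have hk1lim : Tendsto kseq atTop (𝓝 1) := by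
    have h := (Real.continuous_exp.tendsto _).comp hL0
    rw [Real.exp_zero] at h
    refine h.congr ?_
    intro n
    simp only [Function.comp, hLdef, Real.exp_log (hk0 n)]
  -- slope of exp at 0
  have hslope : Tendsto (fun n => (Real.exp (2 * L n) - 1) / (2 * L n)) atTop (𝓝 1) := by
    have hder : HasDerivAt Real.exp 1 0 := by simpa using Real.hasDerivAt_exp 0
    have hs := hasDerivAt_iff_tendsto_slope.mp hder
    have h2L : Tendsto (fun n => 2 * L n) atTop (𝓝[≠] (0 : ℝ)) := by
      rw [tendsto_nhdsWithin_iff]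
      constructor
      · simpa using hL0.const_mul 2
      · filter_upwards with n
        have := hLneg n
        simp only [Set.mem_compl_iff, Set.mem_singleton_iff]
        nlinarith
    have h := hs.comp h2L
    refine h.congr ?_
    intro n
    simp [Function.comp, slope_def_field, Real.exp_zero]
  -- n * (1 - kseq n ^ 2) → -2 log ktot
  have hone : Tendsto (fun n : ℕ => (n : ℝ) * (1 - kseq n ^ 2)) atTop
      (𝓝 (-2 * Real.log ktot)) := by
    have h := (hnL.const_mul (-2)).mul hslope
    rw [mul_one] at h
    have h' : Tendsto (fun n : ℕ => -2 * ((n : ℝ) * L n) * ((Real.exp (2 * L n) - 1) / (2 * L n)))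
        atTop (𝓝 (-2 * Real.log ktot)) := h
    refine h'.congr ?_
    intro n
    have hLne : L n ≠ 0 := ne_of_lt (hLneg n)
    have hk2 : kseq n ^ 2 = Real.exp (2 * L n) := by
      have : kseq n = Real.exp (L n) := (Real.exp_log (hk0 n)).symm
      rw [this, ← Real.exp_nat_mul]
      norm_num
    rw [hk2]
    field_simp
    ring
  -- q n * (1 - kseq n ^ 2) → a * (-2 log ktot)
  have hq2 : Tendsto (fun n => (qseq n : ℝ) * (1 - kseq n ^ 2)) atTop
      (𝓝 (a * (-2 * Real.log ktot))) := by
    have h := hq.mul hone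
    refine h.congr' ?_
    filter_upwards [eventually_ge_atTop 1] with n hn
    have hn0 : (n : ℝ) ≠ 0 := by positivity
    field_simp
  -- denominator
  have hden : Tendsto (fun n => (qseq n : ℝ) * (1 - kseq n ^ 2)
      - 2 * kseq n * (1 - kseq n ^ qseq n)) atTop
      (𝓝 (-2 * (a * Real.log ktot + (1 - ktot ^ a)))) := by
    have h : Tendsto (fun n => (qseq n : ℝ) * (1 - kseq n ^ 2)
        - 2 * kseq n * (1 - kseq n ^ qseq n)) atTop
        (𝓝 (a * (-2 * Real.log ktot) - 2 * 1 * (1 - ktot ^ a))) :=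
      hq2.sub ((hk1lim.const_mul 2).mul (tendsto_const_nhds.sub hkq))
    convert h using 2
    ring
  -- numerator
  have hnum : Tendsto (fun n => (1 - kseq n ^ qseq n) ^ 2 * kseq n ^ (dseq n + 1 - qseq n))
      atTop (𝓝 ((1 - ktot ^ a) ^ 2 * ktot ^ (x - a))) :=
    ((tendsto_const_nhds.sub hkq).pow 2).mul hkd
  -- denominator limit nonzero
  have hne : (-2 * (a * Real.log ktot + (1 - ktot ^ a))) ≠ 0 := by
    have hlog : Real.log ktot < 0 := Real.log_neg hktot0 hktot1
    have h0 : a * Real.log ktot ≠ 0 := ne_of_lt (mul_neg_of_pos_of_neg ha hlog)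
    have h := Real.add_one_lt_exp h0
    rw [mul_comm, ← Real.rpow_def_of_pos hktot0] at h
    nlinarith
  exact hnum.div hden hne
end

section
/- For every real k with 0 < k < 1: ∫₀¹ (1 − z) ∫₀^z ∫₀^y arcsin( √(1 − k^{y−x}) · ( k^{z−y}·(1 − √(1 − k^{x})·√(1 − k^{z})) + k^{x} ) / (4·√(1 − k^{z})) ) dx dy dz > 0. -/
set_option maxHeartbeats 1000000

open Real MeasureTheory intervalIntegral Set

noncomputable def fI (k z y x : ℝ) : ℝ :=
  Real.arcsin (Real.sqrt (1 - k ^ (y - x)) *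
      (k ^ (z - y) * (1 - Real.sqrt (1 - k ^ x) * Real.sqrt (1 - k ^ z)) + k ^ x) /
    (4 * Real.sqrt (1 - k ^ z)))

noncomputable def HI (k z y : ℝ) : ℝ := ∫ x in (0:ℝ)..y, fI k z y x
noncomputable def GI (k z : ℝ) : ℝ := ∫ y in (0:ℝ)..z, HI k z y
noncomputable def FI (k z : ℝ) : ℝ := (1 - z) * GI k z

lemma cont_rpow {k : ℝ} (hk0 : 0 < k) : Continuous fun t : ℝ => k ^ t :=
  continuous_iff_continuousAt.mpr fun _ => Real.continuousAt_const_rpow hk0.ne'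

lemma fI_cont {k c : ℝ} (hk0 : 0 < k) (hk1 : k < 1) (hc : 0 < c) :
    Continuous fun p : ℝ × ℝ × ℝ => fI k (max p.1 c) p.2.1 p.2.2 := by
  have hrp := cont_rpow hk0
  have h1 : Continuous fun p : ℝ × ℝ × ℝ => k ^ (max p.1 c) :=
    hrp.comp ((continuous_fst).max continuous_const)
  have hden : Continuous fun p : ℝ × ℝ × ℝ => 4 * Real.sqrt (1 - k ^ (max p.1 c)) :=
    continuous_const.mul (Real.continuous_sqrt.comp (continuous_const.sub h1))
  have hdenne : ∀ p : ℝ × ℝ × ℝ, 4 * Real.sqrt (1 - k ^ (max p.1 c)) ≠ 0 := by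
    intro p
    have hlt : k ^ (max p.1 c) < 1 :=
      Real.rpow_lt_one hk0.le hk1 (lt_of_lt_of_le hc (le_max_right _ _))
    have : 0 < Real.sqrt (1 - k ^ (max p.1 c)) := Real.sqrt_pos.mpr (by linarith)
    positivity
  have hnum : Continuous fun p : ℝ × ℝ × ℝ =>
      Real.sqrt (1 - k ^ (p.2.1 - p.2.2)) *
      (k ^ (max p.1 c - p.2.1) *
        (1 - Real.sqrt (1 - k ^ p.2.2) * Real.sqrt (1 - k ^ (max p.1 c))) + k ^ p.2.2) := by
    apply Continuous.mul
    · exact Real.continuous_sqrt.comp (continuous_const.sub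
        (hrp.comp ((continuous_fst.comp continuous_snd).sub
          (continuous_snd.comp continuous_snd))))
    · apply Continuous.add
      · apply Continuous.mul
        · exact hrp.comp (((continuous_fst).max continuous_const).sub
            (continuous_fst.comp continuous_snd))
        · exact continuous_const.sub (Continuous.mul
            (Real.continuous_sqrt.comp (continuous_const.sub
              (hrp.comp (continuous_snd.comp continuous_snd))))
            (Real.continuous_sqrt.comp (continuous_const.sub h1)))
      · exact hrp.comp (continuous_snd.comp continuous_snd)
  exact Real.continuous_arcsin.comp (hnum.div hden hdenne)

lemma fI_cont_fixed {k z : ℝ} (hk0 : 0 < k) (hk1 : k < 1) (hz : 0 < z) :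
    Continuous fun q : ℝ × ℝ => fI k z q.1 q.2 := by
  have heq : (fun q : ℝ × ℝ => fI k z q.1 q.2) =
      (fun p : ℝ × ℝ × ℝ => fI k (max p.1 z) p.2.1 p.2.2) ∘ (fun q : ℝ × ℝ => (z, q)) := by
    funext q
    simp [Function.comp, max_self]
  rw [heq]
  exact (fI_cont hk0 hk1 hz).comp
    (Continuous.prodMk continuous_const continuous_id)

lemma fI_pos {k z y x : ℝ} (hk0 : 0 < k) (hk1 : k < 1) (hz : 0 < z) (hxy : x < y) :
    0 < fI k z y x := by
  rw [fI, Real.arcsin_pos]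
  have hzlt : k ^ z < 1 := Real.rpow_lt_one hk0.le hk1 hz
  have hden : 0 < 4 * Real.sqrt (1 - k ^ z) := by
    have : 0 < Real.sqrt (1 - k ^ z) := Real.sqrt_pos.mpr (by linarith)
    positivity
  apply div_pos _ hden
  have hsq : 0 < Real.sqrt (1 - k ^ (y - x)) := by
    have : k ^ (y - x) < 1 := Real.rpow_lt_one hk0.le hk1 (by linarith)
    exact Real.sqrt_pos.mpr (by linarith)
  apply mul_pos hsq
  have hx : 0 < k ^ x := Real.rpow_pos_of_pos hk0 x
  have h1 : Real.sqrt (1 - k ^ x) ≤ 1 := Real.sqrt_le_one.mpr (by linarith)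
  have hzpos : 0 < k ^ z := Real.rpow_pos_of_pos hk0 z
  have h2 : Real.sqrt (1 - k ^ z) ≤ 1 := Real.sqrt_le_one.mpr (by linarith)
  have h3 : Real.sqrt (1 - k ^ x) * Real.sqrt (1 - k ^ z) ≤ 1 := by
    nlinarith [Real.sqrt_nonneg (1 - k ^ x), Real.sqrt_nonneg (1 - k ^ z)]
  have h4 : 0 < k ^ (z - y) := Real.rpow_pos_of_pos hk0 _
  nlinarith

lemma fI_abs_le (k z y x : ℝ) : ‖fI k z y x‖ ≤ π / 2 := by
  rw [Real.norm_eq_abs, abs_le]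
  exact ⟨Real.neg_pi_div_two_le_arcsin _, Real.arcsin_le_pi_div_two _⟩

lemma HI_bd {k z y : ℝ} (hy : |y| ≤ 1) : ‖HI k z y‖ ≤ π / 2 := by
  calc ‖HI k z y‖ ≤ (π / 2) * |y - 0| :=
        intervalIntegral.norm_integral_le_of_norm_le_const fun x _ => fI_abs_le k z y x
    _ ≤ π / 2 := by rw [sub_zero]; nlinarith [Real.pi_pos]

lemma HI_cont {k z : ℝ} (hk0 : 0 < k) (hk1 : k < 1) (hz : 0 < z) :
    Continuous (HI k z) :=
  continuous_parametric_intervalIntegral_of_continuous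
    (f := fun y x => fI k z y x) (μ := volume)
    (fI_cont_fixed hk0 hk1 hz) continuous_id

lemma FI_pos {k z : ℝ} (hk0 : 0 < k) (hk1 : k < 1) (hz : z ∈ Ioo (0:ℝ) 1) :
    0 < FI k z := by
  have hGpos : 0 < GI k z := by
    apply intervalIntegral_pos_of_pos_on
    · exact (HI_cont hk0 hk1 hz.1).intervalIntegrable 0 z
    · intro y hy
      apply intervalIntegral_pos_of_pos_on
      · exact ((fI_cont_fixed hk0 hk1 hz.1).comp
          (Continuous.prodMk continuous_const continuous_id)).intervalIntegrable 0 y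
      · intro x hx
        exact fI_pos hk0 hk1 hz.1 hx.2
      · exact hy.1
    · exact hz.1
  have h1 : 0 < 1 - z := by linarith [hz.2]
  exact mul_pos h1 hGpos

lemma fI_cont'' {k : ℝ} (hk0 : 0 < k) (hk1 : k < 1) {X : Type*} [TopologicalSpace X]
    {u v w : X → ℝ} (hu : Continuous u) (hv : Continuous v) (hw : Continuous w)
    (hlt : ∀ p, k ^ (u p) < 1) :
    Continuous fun p => fI k (u p) (v p) (w p) := by
  have hrp := cont_rpow hk0
  have h1 : Continuous fun p => k ^ (u p) := hrp.comp hu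
  have hden : Continuous fun p => 4 * Real.sqrt (1 - k ^ (u p)) :=
    continuous_const.mul (Real.continuous_sqrt.comp (continuous_const.sub h1))
  have hdenne : ∀ p, 4 * Real.sqrt (1 - k ^ (u p)) ≠ 0 := by
    intro p
    have h := hlt p
    have : 0 < Real.sqrt (1 - k ^ (u p)) := Real.sqrt_pos.mpr (by linarith)
    positivity
  have hnum : Continuous fun p =>
      Real.sqrt (1 - k ^ (v p - w p)) *
      (k ^ (u p - v p) *
        (1 - Real.sqrt (1 - k ^ (w p)) * Real.sqrt (1 - k ^ (u p))) + k ^ (w p)) := by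
    apply Continuous.mul
    · exact Real.continuous_sqrt.comp (continuous_const.sub (hrp.comp (hv.sub hw)))
    · apply Continuous.add
      · apply Continuous.mul
        · exact hrp.comp (hu.sub hv)
        · exact continuous_const.sub (Continuous.mul
            (Real.continuous_sqrt.comp (continuous_const.sub (hrp.comp hw)))
            (Real.continuous_sqrt.comp (continuous_const.sub h1)))
      · exact hrp.comp hw
  exact Real.continuous_arcsin.comp (hnum.div hden hdenne)

lemma GI_contAt {k : ℝ} (hk0 : 0 < k) (hk1 : k < 1) {z₀ : ℝ} (hz₀ : 0 < z₀) :
    ContinuousAt (GI k) z₀ := by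
  have hcpos : 0 < z₀ / 2 := by positivity
  have hHc : Continuous fun p : ℝ × ℝ => ∫ x in (0:ℝ)..p.2, fI k (max p.1 (z₀/2)) p.2 x := by
    apply continuous_parametric_intervalIntegral_of_continuous
      (f := fun p : ℝ × ℝ => fun x => fI k (max p.1 (z₀/2)) p.2 x) (μ := volume)
      ?_ continuous_snd
    show Continuous fun q : (ℝ × ℝ) × ℝ => fI k (max q.1.1 (z₀/2)) q.1.2 q.2
    apply fI_cont'' hk0 hk1
    · fun_prop
    · fun_prop
    · fun_prop
    · intro p
      exact Real.rpow_lt_one hk0.le hk1 (lt_of_lt_of_le hcpos (le_max_right _ _))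
  have hGc : Continuous fun z => ∫ y in (0:ℝ)..z,
      ∫ x in (0:ℝ)..y, fI k (max z (z₀/2)) y x := by
    apply continuous_parametric_intervalIntegral_of_continuous
      (f := fun z y => ∫ x in (0:ℝ)..y, fI k (max z (z₀/2)) y x) (μ := volume)
      ?_ continuous_id
    exact hHc
  apply hGc.continuousAt.congr
  have hmem : Ioi (z₀/2) ∈ nhds z₀ := Ioi_mem_nhds (by linarith)
  filter_upwards [hmem] with z hz
  have hmax : max z (z₀/2) = z := max_eq_left (le_of_lt hz)
  simp only [GI, HI, hmax]

lemma FI_intble {k : ℝ} (hk0 : 0 < k) (hk1 : k < 1) :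
    IntervalIntegrable (FI k) volume 0 1 := by
  have hFcont : ContinuousOn (FI k) (Ioc (0:ℝ) 1) := by
    intro z hz
    exact ((continuousAt_const.sub continuousAt_id).mul
      (GI_contAt hk0 hk1 hz.1)).continuousWithinAt
  rw [intervalIntegrable_iff_integrableOn_Ioc_of_le (by norm_num : (0:ℝ) ≤ 1)]
  refine ⟨hFcont.aestronglyMeasurable measurableSet_Ioc, ?_⟩
  apply MeasureTheory.HasFiniteIntegral.restrict_of_bounded
    (C := π / 2) measure_Ioc_lt_top
  rw [ae_restrict_iff' measurableSet_Ioc]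
  filter_upwards with z hz
  obtain ⟨hz0, hz1⟩ := hz
  have hGbd : ‖GI k z‖ ≤ (π / 2) * |z - 0| := by
    apply intervalIntegral.norm_integral_le_of_norm_le_const
    intro y hy
    rw [Set.uIoc_of_le hz0.le] at hy
    apply HI_bd
    rw [abs_le]
    exact ⟨by linarith [hy.1], by linarith [hy.2]⟩
  have h1z : |1 - z| ≤ 1 := by rw [abs_le]; constructor <;> linarith
  calc ‖FI k z‖ = |1 - z| * ‖GI k z‖ := by
        rw [FI, Real.norm_eq_abs, Real.norm_eq_abs, abs_mul]
    _ ≤ 1 * ((π / 2) * |z - 0|) :=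
        mul_le_mul h1z hGbd (norm_nonneg _) zero_le_one
    _ ≤ π / 2 := by
        rw [sub_zero, one_mul, abs_of_pos hz0]
        nlinarith [Real.pi_pos]

theorem stmt_12 (k : ℝ) (hk0 : 0 < k) (hk1 : k < 1) :
    0 < ∫ z in (0 : ℝ)..1, (1 - z) * ∫ y in (0 : ℝ)..z, ∫ x in (0 : ℝ)..y,
      Real.arcsin (Real.sqrt (1 - k ^ (y - x)) *
          (k ^ (z - y) * (1 - Real.sqrt (1 - k ^ x) * Real.sqrt (1 - k ^ z)) + k ^ x) /
        (4 * Real.sqrt (1 - k ^ z))) := by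
  have h : (0:ℝ) < ∫ z in (0:ℝ)..1, FI k z :=
    intervalIntegral_pos_of_pos_on (FI_intble hk0 hk1)
      (fun z hz => FI_pos hk0 hk1 hz) (by norm_num)
  simpa only [FI, GI, HI, fI] using h
end
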